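/- The function s ↦ wᵀ e^{As} e_1 is nondecreasing on [0, ∞), takes the value 0 at s = 0, and satisfies 0 ≤ wᵀ e^{As} e_1 ≤ 1 for all s ≥ 0. -/

import Mathlib

open Matrix
open scoped Nat

namespace InfectionCdfAux

variable {N : ℕ}

lemma pow_entry_nonneg (B : Matrix (Fin N) (Fin N) ℝ) (hB : ∀ i j, 0 ≤ B i j) :
    ∀ (n : ℕ) (i j : Fin N), 0 ≤ (B ^ n) i j := by
  intro n
  induction n with
  | zero =>
      intro i j
      rw [pow_zero]
      by_cases h : i = j <;> simp [Matrix.one_apply, h]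
  | succ n ih =>
      intro i j
      rw [pow_succ, Matrix.mul_apply]
      exact Finset.sum_nonneg fun k _ => mul_nonneg (ih i k) (hB k j)

lemma exp_entry_nonneg_of_entry_nonneg (B : Matrix (Fin N) (Fin N) ℝ)
    (hB : ∀ i j, 0 ≤ B i j) (i j : Fin N) :
    0 ≤ NormedSpace.exp B i j := by
  letI : SeminormedRing (Matrix (Fin N) (Fin N) ℝ) := Matrix.linftyOpSemiNormedRing
  letI : NormedRing (Matrix (Fin N) (Fin N) ℝ) := Matrix.linftyOpNormedRing
  letI : NormedAlgebra ℝ (Matrix (Fin N) (Fin N) ℝ) := Matrix.linftyOpNormedAlgebra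
  have hsum : HasSum (fun n : ℕ => (n !⁻¹ : ℝ) • B ^ n) (NormedSpace.exp B) :=
    NormedSpace.exp_series_hasSum_exp' B
  let L : Matrix (Fin N) (Fin N) ℝ →ₗ[ℝ] ℝ :=
    { toFun := fun M => M i j
      map_add' := fun _ _ => rfl
      map_smul' := fun _ _ => rfl }
  let Phi : Matrix (Fin N) (Fin N) ℝ →L[ℝ] ℝ := ⟨L, L.continuous_of_finiteDimensional⟩
  have hsum2 : HasSum (fun n : ℕ => Phi ((n !⁻¹ : ℝ) • B ^ n)) (Phi (NormedSpace.exp B)) :=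
    hsum.mapL Phi
  have hterm : ∀ n : ℕ, 0 ≤ Phi ((n !⁻¹ : ℝ) • B ^ n) := by
    intro n
    show 0 ≤ (n !⁻¹ : ℝ) * (B ^ n) i j
    exact mul_nonneg (inv_nonneg.2 (Nat.cast_nonneg _)) (pow_entry_nonneg B hB n i j)
  have h0 : 0 ≤ Phi (NormedSpace.exp B) := by
    rw [← hsum2.tsum_eq]
    exact tsum_nonneg hterm
  exact h0

lemma exp_entry_nonneg (M : Matrix (Fin N) (Fin N) ℝ)
    (hM : ∀ i j, i ≠ j → 0 ≤ M i j) (i j : Fin N) :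
    0 ≤ NormedSpace.exp M i j := by
  letI : SeminormedRing (Matrix (Fin N) (Fin N) ℝ) := Matrix.linftyOpSemiNormedRing
  letI : NormedRing (Matrix (Fin N) (Fin N) ℝ) := Matrix.linftyOpNormedRing
  letI : NormedAlgebra ℝ (Matrix (Fin N) (Fin N) ℝ) := Matrix.linftyOpNormedAlgebra
  classical
  set c : ℝ := ∑ k : Fin N, |M k k| with hc
  have hcn : ∀ k : Fin N, 0 ≤ M k k + c := by
    intro k
    have h1 : |M k k| ≤ c :=
      Finset.single_le_sum (f := fun k : Fin N => |M k k|) (fun i _ => abs_nonneg _)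
        (Finset.mem_univ k)
    have h2 := neg_abs_le (M k k)
    linarith
  set B : Matrix (Fin N) (Fin N) ℝ := M + c • (1 : Matrix (Fin N) (Fin N) ℝ) with hBdef
  have hB : ∀ i j, 0 ≤ B i j := by
    intro i' j'
    by_cases h : i' = j'
    · subst h
      have : B i' i' = M i' i' + c := by
        simp [hBdef, Matrix.add_apply, Matrix.smul_apply, Matrix.one_apply]
      rw [this]
      exact hcn i'
    · have : B i' j' = M i' j' := by
        simp [hBdef, Matrix.add_apply, Matrix.smul_apply, Matrix.one_apply, h]
      rw [this]
      exact hM i' j' h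
  have hsplit : NormedSpace.exp M = Real.exp (-c) • NormedSpace.exp B := by
    have h1 : M = B + (-c) • (1 : Matrix (Fin N) (Fin N) ℝ) := by
      rw [hBdef]
      ext i' j'
      simp [Matrix.add_apply, Matrix.smul_apply]
    have hcomm : Commute B ((-c) • (1 : Matrix (Fin N) (Fin N) ℝ)) :=
      (Commute.one_right B).smul_right (-c)
    have hscalar : NormedSpace.exp ((-c) • (1 : Matrix (Fin N) (Fin N) ℝ))
        = Real.exp (-c) • (1 : Matrix (Fin N) (Fin N) ℝ) := by
      have h2 : (-c) • (1 : Matrix (Fin N) (Fin N) ℝ)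
          = algebraMap ℝ (Matrix (Fin N) (Fin N) ℝ) (-c) :=
        (Algebra.algebraMap_eq_smul_one (-c)).symm
      have h3 := NormedSpace.algebraMap_exp_comm (𝔸 := Matrix (Fin N) (Fin N) ℝ) (-c)
      rw [h2]
      convert h3.symm using 1
      · rfl
      rw [← Real.exp_eq_exp_ℝ, Algebra.algebraMap_eq_smul_one]
    calc NormedSpace.exp M
        = NormedSpace.exp B * NormedSpace.exp ((-c) • (1 : Matrix (Fin N) (Fin N) ℝ)) := by
          rw [← Matrix.exp_add_of_commute B _ hcomm, ← h1]
      _ = Real.exp (-c) • NormedSpace.exp B := by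
          rw [hscalar, mul_smul_comm, mul_one]
  rw [hsplit]
  have : (Real.exp (-c) • NormedSpace.exp B) i j = Real.exp (-c) * NormedSpace.exp B i j := rfl
  rw [this]
  exact mul_nonneg (Real.exp_nonneg _) (exp_entry_nonneg_of_entry_nonneg B hB i j)

lemma vecMul_exp_of_vecMul_eq_zero (M : Matrix (Fin N) (Fin N) ℝ) (u : Fin N → ℝ)
    (hu : u ᵥ* M = 0) : u ᵥ* NormedSpace.exp M = u := by
  letI : SeminormedRing (Matrix (Fin N) (Fin N) ℝ) := Matrix.linftyOpSemiNormedRing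
  letI : NormedRing (Matrix (Fin N) (Fin N) ℝ) := Matrix.linftyOpNormedRing
  letI : NormedAlgebra ℝ (Matrix (Fin N) (Fin N) ℝ) := Matrix.linftyOpNormedAlgebra
  have hpow : ∀ n : ℕ, n ≠ 0 → u ᵥ* (M ^ n) = 0 := by
    intro n hn
    obtain ⟨m, rfl⟩ : ∃ m, n = m + 1 := ⟨n - 1, by omega⟩
    rw [pow_succ']
    rw [← Matrix.vecMul_vecMul, hu, Matrix.zero_vecMul]
  have hsum : HasSum (fun n : ℕ => (n !⁻¹ : ℝ) • M ^ n) (NormedSpace.exp M) :=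
    NormedSpace.exp_series_hasSum_exp' M
  let L : Matrix (Fin N) (Fin N) ℝ →ₗ[ℝ] (Fin N → ℝ) :=
    { toFun := fun P => u ᵥ* P
      map_add' := fun P Q => Matrix.vecMul_add P Q u
      map_smul' := by
        intro r P
        ext j
        simp [Matrix.vecMul, dotProduct, Matrix.smul_apply, smul_eq_mul,
          Finset.mul_sum, mul_left_comm] }
  let Phi : Matrix (Fin N) (Fin N) ℝ →L[ℝ] (Fin N → ℝ) := ⟨L, L.continuous_of_finiteDimensional⟩
  have hsum2 : HasSum (fun n : ℕ => Phi ((n !⁻¹ : ℝ) • M ^ n)) (Phi (NormedSpace.exp M)) :=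
    hsum.mapL Phi
  have hsingle : HasSum (fun n : ℕ => Phi ((n !⁻¹ : ℝ) • M ^ n)) u := by
    have h := hasSum_single (f := fun n : ℕ => Phi ((n !⁻¹ : ℝ) • M ^ n)) 0 (by
      intro n hn
      have hz : Phi (M ^ n) = 0 := hpow n hn
      show Phi ((n !⁻¹ : ℝ) • M ^ n) = 0
      rw [_root_.map_smul, hz, smul_zero])
    have h0 : Phi ((0 !⁻¹ : ℝ) • M ^ 0) = u := by
      have hz : Phi (M ^ 0) = u := by
        show u ᵥ* (M ^ 0) = u
        rw [pow_zero, Matrix.vecMul_one]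
      rw [_root_.map_smul, hz]
      simp
    have h' : HasSum (fun n : ℕ => Phi ((n !⁻¹ : ℝ) • M ^ n)) (Phi ((0 !⁻¹ : ℝ) • M ^ 0)) := h
    rwa [h0] at h'
  exact hsum2.unique hsingle

end InfectionCdfAux

open InfectionCdfAux in
/-- `F^{Inf}(s) = wᵀ e^{As} e₁` is a valid cdf: it is nondecreasing on `[0, ∞)`, equals `0`
at `s = 0`, and stays in `[0, 1]` for all `s ≥ 0` (Proposition 9, Infection model). -/
theorem infection_cdf_valid (N : ℕ) (hN : 2 ≤ N) (lc : ℝ) (hlc : 0 < lc)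
    (A : Matrix (Fin N) (Fin N) ℝ)
    (hA : ∀ i j : Fin N, A i j =
      if (i : ℕ) = (j : ℕ) then
        -((((i : ℕ) : ℝ) + 1) * ((N : ℝ) - (((i : ℕ) : ℝ) + 1)) * lc)
      else if (i : ℕ) = (j : ℕ) + 1 then
        (((j : ℕ) : ℝ) + 1) * ((N : ℝ) - (((j : ℕ) : ℝ) + 1)) * lc
      else 0)
    (w : Fin N → ℝ) (hw : ∀ k : Fin N, w k = ((k : ℕ) : ℝ) / ((N : ℝ) - 1))
    (e1 : Fin N → ℝ) (he1 : ∀ j : Fin N, e1 j = if (j : ℕ) = 0 then 1 else 0) :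
    MonotoneOn (fun s : ℝ => w ⬝ᵥ (NormedSpace.exp (s • A) *ᵥ e1)) (Set.Ici 0) ∧
    w ⬝ᵥ (NormedSpace.exp ((0 : ℝ) • A) *ᵥ e1) = 0 ∧
    ∀ s : ℝ, 0 ≤ s →
      0 ≤ w ⬝ᵥ (NormedSpace.exp (s • A) *ᵥ e1) ∧
      w ⬝ᵥ (NormedSpace.exp (s • A) *ᵥ e1) ≤ 1 := by
  classical
  have hN1 : (0 : ℝ) < (N : ℝ) - 1 := by
    have : (2 : ℝ) ≤ (N : ℝ) := by exact_mod_cast hN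
    linarith
  -- basic facts about w
  have hw0 : ∀ k : Fin N, 0 ≤ w k := by
    intro k
    rw [hw k]
    exact div_nonneg (Nat.cast_nonneg _) hN1.le
  have hw1 : ∀ k : Fin N, w k ≤ 1 := by
    intro k
    rw [hw k]
    rw [div_le_one hN1]
    have : (k : ℕ) + 1 ≤ N := k.isLt
    have : ((k : ℕ) : ℝ) + 1 ≤ (N : ℝ) := by exact_mod_cast this
    linarith
  -- e1 facts
  have h0N : 0 < N := by omega
  set j0 : Fin N := ⟨0, h0N⟩ with hj0
  have he1j0 : e1 j0 = 1 := by rw [he1]; simp [hj0]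
  have he1ne : ∀ j : Fin N, j ≠ j0 → e1 j = 0 := by
    intro j hj
    rw [he1]
    have : (j : ℕ) ≠ 0 := fun h => hj (Fin.ext h)
    simp [this]
  have he1nonneg : ∀ j : Fin N, 0 ≤ e1 j := by
    intro j
    rw [he1]
    split <;> norm_num
  -- off-diagonal entries of A are nonnegative
  have hAoff : ∀ i j : Fin N, i ≠ j → 0 ≤ A i j := by
    intro i j hij
    rw [hA i j]
    have hij' : (i : ℕ) ≠ (j : ℕ) := fun h => hij (Fin.ext h)
    rw [if_neg hij']
    split_ifs with h2
    · have hjN : (j : ℕ) + 1 < N := h2 ▸ i.isLt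
      have hle : ((j : ℕ) : ℝ) + 1 ≤ (N : ℝ) := by exact_mod_cast hjN.le
      have h1 : (0 : ℝ) ≤ ((j : ℕ) : ℝ) + 1 := by positivity
      exact mul_nonneg (mul_nonneg h1 (by linarith)) hlc.le
    · exact le_refl 0
  -- key column-sum formula
  have hsum_col : ∀ (g : Fin N → ℝ) (j : Fin N), (g ᵥ* A) j =
      g j * A j j + (if h : (j : ℕ) + 1 < N then
        g ⟨(j : ℕ) + 1, h⟩ * A ⟨(j : ℕ) + 1, h⟩ j else 0) := by
    intro g j
    have hdef : (g ᵥ* A) j = ∑ i : Fin N, g i * A i j := rfl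
    rw [hdef]
    by_cases hjN : (j : ℕ) + 1 < N
    · rw [dif_pos hjN]
      set i₀ : Fin N := ⟨(j : ℕ) + 1, hjN⟩ with hi₀
      have hji : j ≠ i₀ := by
        intro h
        have : (j : ℕ) = (j : ℕ) + 1 := congrArg Fin.val h
        omega
      have hzero : ∀ i ∈ Finset.univ, i ∉ ({j, i₀} : Finset (Fin N)) → g i * A i j = 0 := by
        intro i _ hi
        simp only [Finset.mem_insert, Finset.mem_singleton, not_or] at hi
        obtain ⟨h1, h2⟩ := hi
        have h1' : (i : ℕ) ≠ (j : ℕ) := fun h => h1 (Fin.ext h)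
        have h2' : (i : ℕ) ≠ (j : ℕ) + 1 := by
          intro h
          exact h2 (Fin.ext h)
        rw [hA i j, if_neg h1', if_neg h2', mul_zero]
      rw [← Finset.sum_subset (Finset.subset_univ ({j, i₀} : Finset (Fin N))) hzero,
        Finset.sum_pair hji]
    · rw [dif_neg hjN, add_zero]
      have hzero : ∀ i ∈ Finset.univ, i ∉ ({j} : Finset (Fin N)) → g i * A i j = 0 := by
        intro i _ hi
        simp only [Finset.mem_singleton] at hi
        have h1' : (i : ℕ) ≠ (j : ℕ) := fun h => hi (Fin.ext h)
        have h2' : (i : ℕ) ≠ (j : ℕ) + 1 := by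
          have := i.isLt
          omega
        rw [hA i j, if_neg h1', if_neg h2', mul_zero]
      rw [← Finset.sum_subset (Finset.subset_univ ({j} : Finset (Fin N))) hzero,
        Finset.sum_singleton]
  -- the column sums of A vanish
  have hones : (fun _ : Fin N => (1 : ℝ)) ᵥ* A = 0 := by
    funext j
    rw [hsum_col (fun _ : Fin N => (1 : ℝ)) j, Pi.zero_apply]
    by_cases hjN : (j : ℕ) + 1 < N
    · rw [dif_pos hjN, hA j j, if_pos rfl, hA ⟨(j : ℕ) + 1, hjN⟩ j]
      have h1 : (((⟨(j : ℕ) + 1, hjN⟩ : Fin N) : ℕ)) = (j : ℕ) + 1 := rfl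
      rw [if_neg (by omega), if_pos h1]
      ring
    · rw [dif_neg hjN, add_zero, hA j j, if_pos rfl]
      have hje : (j : ℕ) + 1 = N := by
        have := j.isLt
        omega
      have hje' : ((j : ℕ) : ℝ) + 1 = (N : ℝ) := by exact_mod_cast hje
      have hz : (N : ℝ) - (((j : ℕ) : ℝ) + 1) = 0 := by linarith
      rw [hz]
      ring
  -- w ᵥ* A is nonnegative componentwise
  have hwA : ∀ j : Fin N, 0 ≤ (w ᵥ* A) j := by
    intro j
    rw [hsum_col w j]
    by_cases hjN : (j : ℕ) + 1 < N
    · rw [dif_pos hjN, hA j j, if_pos rfl, hA ⟨(j : ℕ) + 1, hjN⟩ j]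
      have h1 : (((⟨(j : ℕ) + 1, hjN⟩ : Fin N) : ℕ)) = (j : ℕ) + 1 := rfl
      rw [if_neg (by omega), if_pos h1, hw j, hw ⟨(j : ℕ) + 1, hjN⟩]
      set a : ℝ := ((j : ℕ) : ℝ) with ha
      have hcast : (((⟨(j : ℕ) + 1, hjN⟩ : Fin N) : ℕ) : ℝ) = a + 1 := by
        rw [h1]; push_cast; rfl
      rw [hcast]
      have hle : a + 1 ≤ (N : ℝ) := by
        rw [ha]
        have : (j : ℕ) + 1 ≤ N := hjN.le
        exact_mod_cast this
      have ha0 : 0 ≤ a := Nat.cast_nonneg _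
      have key : a / ((N : ℝ) - 1) * -((a + 1) * ((N : ℝ) - (a + 1)) * lc)
          + (a + 1) / ((N : ℝ) - 1) * ((a + 1) * ((N : ℝ) - (a + 1)) * lc)
          = (a + 1) * ((N : ℝ) - (a + 1)) * lc / ((N : ℝ) - 1) := by
        field_simp
        ring
      rw [key]
      apply div_nonneg _ hN1.le
      exact mul_nonneg (mul_nonneg (by linarith) (by linarith)) hlc.le
    · rw [dif_neg hjN, add_zero, hA j j, if_pos rfl]
      have hje : (j : ℕ) + 1 = N := by
        have := j.isLt
        omega
      have hje' : ((j : ℕ) : ℝ) + 1 = (N : ℝ) := by exact_mod_cast hje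
      have hz : (N : ℝ) - (((j : ℕ) : ℝ) + 1) = 0 := by linarith
      rw [hz, mul_zero, zero_mul, neg_zero, mul_zero]
  -- column sums of A as explicit sums
  have hcol : ∀ j : Fin N, ∑ i : Fin N, A i j = 0 := by
    intro j
    have := congrFun hones j
    have hh : (fun _ : Fin N => (1 : ℝ)) ᵥ* A = fun j => ∑ i : Fin N, A i j := by
      funext j'
      show ∑ i : Fin N, (1 : ℝ) * A i j' = _
      simp
    rw [hh] at this
    exact this
  -- exp(s•A) has nonnegative entries for s ≥ 0
  have hE : ∀ s : ℝ, 0 ≤ s → ∀ i j : Fin N, 0 ≤ NormedSpace.exp (s • A) i j := by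
    intro s hs i j
    apply exp_entry_nonneg
    intro i' j' hij
    show 0 ≤ s * A i' j'
    exact mul_nonneg hs (hAoff i' j' hij)
  -- the all-ones row vector is fixed by exp(s•A)
  have honesE : ∀ s : ℝ,
      (fun _ : Fin N => (1 : ℝ)) ᵥ* NormedSpace.exp (s • A) = fun _ : Fin N => (1 : ℝ) := by
    intro s
    apply vecMul_exp_of_vecMul_eq_zero
    funext j
    show ∑ i : Fin N, (1 : ℝ) * ((s • A) i j) = 0
    have : ∀ i : Fin N, (1 : ℝ) * ((s • A) i j) = s * A i j := by
      intro i
      show (1 : ℝ) * (s * A i j) = s * A i j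
      ring
    rw [Finset.sum_congr rfl fun i _ => this i, ← Finset.mul_sum, hcol j, mul_zero]
  -- entries of p(s) = exp(s•A) *ᵥ e1 are nonnegative
  have hp : ∀ s : ℝ, 0 ≤ s → ∀ i : Fin N, 0 ≤ (NormedSpace.exp (s • A) *ᵥ e1) i := by
    intro s hs i
    show 0 ≤ ∑ j : Fin N, NormedSpace.exp (s • A) i j * e1 j
    exact Finset.sum_nonneg fun j _ => mul_nonneg (hE s hs i j) (he1nonneg j)
  -- sum of entries of p(s) equals 1
  have hpsum : ∀ s : ℝ, ∑ i : Fin N, (NormedSpace.exp (s • A) *ᵥ e1) i = 1 := by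
    intro s
    have h1 : ∑ i : Fin N, (NormedSpace.exp (s • A) *ᵥ e1) i
        = (fun _ : Fin N => (1 : ℝ)) ⬝ᵥ (NormedSpace.exp (s • A) *ᵥ e1) := by
      simp [dotProduct]
    rw [h1, Matrix.dotProduct_mulVec, honesE s]
    show ∑ j : Fin N, (1 : ℝ) * e1 j = 1
    rw [Finset.sum_congr rfl fun j _ => one_mul (e1 j)]
    rw [Finset.sum_eq_single j0 (fun j _ hj => he1ne j hj) (fun h => absurd (Finset.mem_univ _) h)]
    exact he1j0
  -- bounds for all s ≥ 0
  have hbounds : ∀ s : ℝ, 0 ≤ s →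
      0 ≤ w ⬝ᵥ (NormedSpace.exp (s • A) *ᵥ e1) ∧
      w ⬝ᵥ (NormedSpace.exp (s • A) *ᵥ e1) ≤ 1 := by
    intro s hs
    constructor
    · exact Finset.sum_nonneg fun k _ => mul_nonneg (hw0 k) (hp s hs k)
    · calc w ⬝ᵥ (NormedSpace.exp (s • A) *ᵥ e1)
          = ∑ k : Fin N, w k * (NormedSpace.exp (s • A) *ᵥ e1) k := rfl
        _ ≤ ∑ k : Fin N, (NormedSpace.exp (s • A) *ᵥ e1) k :=
            Finset.sum_le_sum fun k _ => mul_le_of_le_one_left (hp s hs k) (hw1 k)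
        _ = 1 := hpsum s
  -- value at 0
  have hzero : w ⬝ᵥ (NormedSpace.exp ((0 : ℝ) • A) *ᵥ e1) = 0 := by
    rw [zero_smul, NormedSpace.exp_zero, Matrix.one_mulVec]
    show ∑ k : Fin N, w k * e1 k = 0
    rw [Finset.sum_eq_single j0 (fun j _ hj => by rw [he1ne j hj, mul_zero])
      (fun h => absurd (Finset.mem_univ _) h)]
    rw [he1j0, mul_one, hw j0]
    simp [hj0]
  -- derivative
  have hderiv : ∀ s : ℝ, HasDerivAt (fun s : ℝ => w ⬝ᵥ (NormedSpace.exp (s • A) *ᵥ e1))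
      ((w ᵥ* A) ⬝ᵥ (NormedSpace.exp (s • A) *ᵥ e1)) s := by
    letI : SeminormedRing (Matrix (Fin N) (Fin N) ℝ) := Matrix.linftyOpSemiNormedRing
    letI : NormedRing (Matrix (Fin N) (Fin N) ℝ) := Matrix.linftyOpNormedRing
    letI : NormedAlgebra ℝ (Matrix (Fin N) (Fin N) ℝ) := Matrix.linftyOpNormedAlgebra
    intro s
    let L : Matrix (Fin N) (Fin N) ℝ →ₗ[ℝ] ℝ :=
      { toFun := fun P => w ⬝ᵥ (P *ᵥ e1)
        map_add' := by
          intro P Q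
          simp [Matrix.add_mulVec, dotProduct_add]
        map_smul' := by
          intro r P
          simp [Matrix.smul_mulVec, dotProduct_smul] }
    let Phi : Matrix (Fin N) (Fin N) ℝ →L[ℝ] ℝ := ⟨L, L.continuous_of_finiteDimensional⟩
    have h1 : HasDerivAt (fun u : ℝ => NormedSpace.exp (u • A))
        (A * NormedSpace.exp (s • A)) s := hasDerivAt_exp_smul_const' (𝕂 := ℝ) A s
    have h2 : HasDerivAt (fun u : ℝ => Phi (NormedSpace.exp (u • A)))
        (Phi (A * NormedSpace.exp (s • A))) s :=
      Phi.hasFDerivAt.comp_hasDerivAt s h1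
    have h3 : Phi (A * NormedSpace.exp (s • A))
        = (w ᵥ* A) ⬝ᵥ (NormedSpace.exp (s • A) *ᵥ e1) := by
      show w ⬝ᵥ ((A * NormedSpace.exp (s • A)) *ᵥ e1) = _
      rw [← Matrix.mulVec_mulVec, Matrix.dotProduct_mulVec]
    rw [h3] at h2
    exact h2
  refine ⟨?_, hzero, hbounds⟩
  -- monotonicity
  have hdiff : ∀ s : ℝ, DifferentiableAt ℝ
      (fun s : ℝ => w ⬝ᵥ (NormedSpace.exp (s • A) *ᵥ e1)) s :=
    fun s => (hderiv s).differentiableAt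
  apply monotoneOn_of_deriv_nonneg (convex_Ici 0)
  · exact fun s _ => (hdiff s).continuousAt.continuousWithinAt
  · intro s _
    exact (hdiff s).differentiableWithinAt
  · intro s hs
    rw [interior_Ici] at hs
    rw [(hderiv s).deriv]
    exact Finset.sum_nonneg fun j _ => mul_nonneg (hwA j) (hp s (le_of_lt hs) j)
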